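/- Suppose E[(μ_{στ} − μ_{σT_t})²] ≤ δ and E[(μ_{στ} − μ_{S_tτ})²] ≤ δ at time t of a communication protocol, where S_t × T_t is the transcript rectangle. Then for all t' > t, E[(μ_{σT_{t'}} − μ_{S_{t'}τ})²] ≤ 4δ, i.e., Alice and Bob δ-agree at all subsequent times. -/

import Mathlib

open Finset Set

variable {Ω S T : Type*}

/-- Conditional expectation of `f` given the event `A`, for a finite outcome space
with weights `p`. -/
noncomputable def cexp [Fintype Ω] (p : Ω → ℝ) (f : Ω → ℝ) (A : Set Ω) : ℝ :=
  (∑ ω, A.indicator (fun ω' => p ω' * f ω') ω) / (∑ ω, A.indicator p ω)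

/-- Expectation of `f` with respect to the weights `p`. -/
noncomputable def pexp [Fintype Ω] (p : Ω → ℝ) (f : Ω → ℝ) : ℝ := ∑ ω, p ω * f ω

/-- `μ_{στ}(ω) = E[Y | σ, τ]`. -/
noncomputable def postBoth [Fintype Ω] (p : Ω → ℝ) (σ : Ω → S) (τ : Ω → T) (Y : Ω → ℝ)
    (ω : Ω) : ℝ :=
  cexp p Y {ω' | σ ω' = σ ω ∧ τ ω' = τ ω}

/-- `μ_σ(ω) = E[Y | σ]`. -/
noncomputable def postSig [Fintype Ω] (p : Ω → ℝ) (σ : Ω → S) (Y : Ω → ℝ) (ω : Ω) : ℝ :=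
  cexp p Y {ω' | σ ω' = σ ω}

/-- `μ_{S'τ}(ω) = E[Y | σ ∈ S', τ]`. -/
noncomputable def postSetSig [Fintype Ω] (p : Ω → ℝ) (σ : Ω → S) (τ : Ω → T) (Y : Ω → ℝ)
    (S' : Set S) (ω : Ω) : ℝ :=
  cexp p Y {ω' | σ ω' ∈ S' ∧ τ ω' = τ ω}

/-- `μ_{σT'}(ω) = E[Y | σ, τ ∈ T']`. -/
noncomputable def postSigSet [Fintype Ω] (p : Ω → ℝ) (σ : Ω → S) (τ : Ω → T) (Y : Ω → ℝ)
    (T' : Set T) (ω : Ω) : ℝ :=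
  cexp p Y {ω' | σ ω' = σ ω ∧ τ ω' ∈ T'}

/-- `μ_{S'T'} = E[Y | σ ∈ S', τ ∈ T']`. -/
noncomputable def postRect [Fintype Ω] (p : Ω → ℝ) (σ : Ω → S) (τ : Ω → T) (Y : Ω → ℝ)
    (S' : Set S) (T' : Set T) : ℝ :=
  cexp p Y {ω' | σ ω' ∈ S' ∧ τ ω' ∈ T'}

/-- The rectangle substitutes condition (with squared-error loss):
for all `S' ⊆ S`, `T' ⊆ T`,
`E[(μ_{στ} - μ_{S'τ})² | σ ∈ S', τ ∈ T'] ≤ E[(μ_{σT'} - μ_{S'T'})² | σ ∈ S', τ ∈ T']`. -/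
noncomputable def RectangleSubstitutes [Fintype Ω] (p : Ω → ℝ) (σ : Ω → S) (τ : Ω → T)
    (Y : Ω → ℝ) : Prop :=
  ∀ (S' : Set S) (T' : Set T),
    cexp p (fun ω => (postBoth p σ τ Y ω - postSetSig p σ τ Y S' ω) ^ 2)
        {ω | σ ω ∈ S' ∧ τ ω ∈ T'} ≤
      cexp p (fun ω => (postSigSet p σ τ Y T' ω - postRect p σ τ Y S' T') ^ 2)
        {ω | σ ω ∈ S' ∧ τ ω ∈ T'}

section Helpers

open Classical

/-- Weighted mean of `f` over a finset `A`. -/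
noncomputable def cmean [Fintype Ω] (p f : Ω → ℝ) (A : Finset Ω) : ℝ :=
  (∑ ω ∈ A, p ω * f ω) / ∑ ω ∈ A, p ω

lemma cexp_eq_cmean [Fintype Ω] (p f : Ω → ℝ) (P : Ω → Prop) [DecidablePred P] :
    cexp p f {ω | P ω} = cmean p f (Finset.univ.filter P) := by
  unfold cexp cmean
  congr 1 <;>
  · rw [Finset.sum_filter]
    refine Finset.sum_congr rfl fun ω _ => ?_
    by_cases h : P ω <;> simp [Set.indicator_apply, h]

/-- Grouping a sum over a union of cells of a partition. -/
lemma sum_partition [Fintype Ω] (cell : Ω → Finset Ω)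
    (hmemc : ∀ ω, ω ∈ cell ω) (hcong : ∀ ω ω', ω' ∈ cell ω → cell ω' = cell ω)
    (A : Finset Ω) (hsub : ∀ ω ∈ A, cell ω ⊆ A) (f : Ω → ℝ) :
    ∑ ω ∈ A, f ω = ∑ B ∈ A.image cell, ∑ ω ∈ B, f ω := by
  classical
  have hdisj : (↑(A.image cell) : Set (Finset Ω)).PairwiseDisjoint id := by
    intro B hB C hC hne
    simp only [Finset.coe_image, Set.mem_image] at hB hC
    obtain ⟨ω1, _, rfl⟩ := hB
    obtain ⟨ω2, _, rfl⟩ := hC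
    refine Finset.disjoint_left.mpr fun x hx1 hx2 => hne ?_
    rw [← hcong ω1 x hx1, ← hcong ω2 x hx2]
  have huniv : A = (A.image cell).biUnion id := by
    apply Finset.ext
    intro x
    simp only [Finset.mem_biUnion, Finset.mem_image, id]
    constructor
    · intro hx
      exact ⟨cell x, ⟨x, hx, rfl⟩, hmemc x⟩
    · rintro ⟨B, ⟨ω, hω, rfl⟩, hx⟩
      exact hsub ω hω hx
  calc ∑ ω ∈ A, f ω = ∑ ω ∈ (A.image cell).biUnion id, f ω := by rw [← huniv]
    _ = ∑ B ∈ A.image cell, ∑ ω ∈ id B, f ω := Finset.sum_biUnion hdisj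
    _ = ∑ B ∈ A.image cell, ∑ ω ∈ B, f ω := rfl

/-- Tower property: summing `p · (cell-mean of Y)` over a union of cells gives `∑ p · Y`. -/
lemma tower_sum [Fintype Ω] (p : Ω → ℝ) (hp : ∀ ω, 0 ≤ p ω) (Y : Ω → ℝ)
    (atom : Ω → Finset Ω) (hmema : ∀ ω, ω ∈ atom ω)
    (hconga : ∀ ω ω', ω' ∈ atom ω → atom ω' = atom ω)
    (A : Finset Ω) (hsub : ∀ ω ∈ A, atom ω ⊆ A) :
    ∑ ω ∈ A, p ω * cmean p Y (atom ω) = ∑ ω ∈ A, p ω * Y ω := by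
  classical
  rw [sum_partition atom hmema hconga A hsub, sum_partition atom hmema hconga A hsub]
  refine Finset.sum_congr rfl fun B hB => ?_
  obtain ⟨ω0, _, rfl⟩ := Finset.mem_image.mp hB
  have hc : ∀ ω ∈ atom ω0, p ω * cmean p Y (atom ω) = p ω * cmean p Y (atom ω0) := by
    intro ω hω; rw [hconga ω0 ω hω]
  rw [Finset.sum_congr rfl hc, ← Finset.sum_mul]
  by_cases hs : ∑ ω ∈ atom ω0, p ω = 0
  · have hz : ∀ ω ∈ atom ω0, p ω = 0 :=
      (Finset.sum_eq_zero_iff_of_nonneg fun ω _ => hp ω).mp hs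
    rw [hs, zero_mul]
    exact (Finset.sum_eq_zero fun ω hω => by rw [hz ω hω, zero_mul]).symm
  · unfold cmean
    field_simp

/-- The cell mean minimizes the weighted sum of squared errors over the cell. -/
lemma cell_min [Fintype Ω] (p : Ω → ℝ) (hp : ∀ ω, 0 ≤ p ω) (X : Ω → ℝ)
    (A : Finset Ω) (c : ℝ) :
    ∑ ω ∈ A, p ω * (X ω - cmean p X A) ^ 2 ≤ ∑ ω ∈ A, p ω * (X ω - c) ^ 2 := by
  classical
  set s := ∑ ω ∈ A, p ω with hs
  set t := ∑ ω ∈ A, p ω * X ω with ht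
  by_cases hs0 : s = 0
  · have hz : ∀ ω ∈ A, p ω = 0 :=
      (Finset.sum_eq_zero_iff_of_nonneg fun ω _ => hp ω).mp hs0
    have e1 : ∑ ω ∈ A, p ω * (X ω - cmean p X A) ^ 2 = 0 :=
      Finset.sum_eq_zero fun ω hω => by rw [hz ω hω, zero_mul]
    have e2 : ∑ ω ∈ A, p ω * (X ω - c) ^ 2 = 0 :=
      Finset.sum_eq_zero fun ω hω => by rw [hz ω hω, zero_mul]
    rw [e1, e2]
  · have hspos : 0 < s :=
      lt_of_le_of_ne (Finset.sum_nonneg fun ω _ => hp ω) (Ne.symm hs0)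
    have hm : cmean p X A = t / s := rfl
    set m := t / s with hmdef
    have htm : t = m * s := by rw [hmdef, div_mul_cancel₀ t hs0]
    have key : ∑ ω ∈ A, p ω * (X ω - c) ^ 2 - ∑ ω ∈ A, p ω * (X ω - m) ^ 2
        = s * (m - c) ^ 2 := by
      rw [← Finset.sum_sub_distrib]
      have e : ∀ ω ∈ A, p ω * (X ω - c) ^ 2 - p ω * (X ω - m) ^ 2
          = (2 * (m - c)) * (p ω * X ω) + (c ^ 2 - m ^ 2) * p ω := fun ω _ => by ring
      rw [Finset.sum_congr rfl e, Finset.sum_add_distrib, ← Finset.mul_sum, ← Finset.mul_sum,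
        ← ht, ← hs, htm]
      ring
    rw [hm]
    linarith [mul_nonneg hspos.le (sq_nonneg (m - c)), key]

/-- Projection inequality: refining the partition only decreases the squared error. -/
lemma projection_le [Fintype Ω] (p : Ω → ℝ) (hp : ∀ ω, 0 ≤ p ω) (X : Ω → ℝ)
    (cell' cell : Ω → Finset Ω)
    (hmem' : ∀ ω, ω ∈ cell' ω) (hcong' : ∀ ω ω', ω' ∈ cell' ω → cell' ω' = cell' ω)
    (hcong : ∀ ω ω', ω' ∈ cell' ω → cell ω' = cell ω) :
    ∑ ω, p ω * (X ω - cmean p X (cell' ω)) ^ 2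
      ≤ ∑ ω, p ω * (X ω - cmean p X (cell ω)) ^ 2 := by
  classical
  rw [sum_partition cell' hmem' hcong' Finset.univ (fun ω _ => Finset.subset_univ _),
    sum_partition cell' hmem' hcong' Finset.univ (fun ω _ => Finset.subset_univ _)]
  refine Finset.sum_le_sum fun B hB => ?_
  obtain ⟨ω0, _, rfl⟩ := Finset.mem_image.mp hB
  have e1 : ∀ ω ∈ cell' ω0, p ω * (X ω - cmean p X (cell' ω)) ^ 2
      = p ω * (X ω - cmean p X (cell' ω0)) ^ 2 := fun ω hω => by rw [hcong' ω0 ω hω]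
  have e2 : ∀ ω ∈ cell' ω0, p ω * (X ω - cmean p X (cell ω)) ^ 2
      = p ω * (X ω - cmean p X (cell ω0)) ^ 2 := fun ω hω => by rw [hcong ω0 ω hω]
  rw [Finset.sum_congr rfl e1, Finset.sum_congr rfl e2]
  exact cell_min p hp X (cell' ω0) (cmean p X (cell ω0))

end Helpers

/-- Once Alice and Bob are close to the truth, they continue to agree: if at time `t`
(rectangles `St ω × Tt ω`) we have `E[(μ_{στ} - μ_{σT_t})²] ≤ δ` and
`E[(μ_{στ} - μ_{S_tτ})²] ≤ δ`, then at any later time `t'` (refined rectangles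
`St' ω × Tt' ω`) we have `E[(μ_{σT_{t'}} - μ_{S_{t'}τ})²] ≤ 4δ`. -/
theorem continue_to_agree
    [Fintype Ω] (p : Ω → ℝ) (hp : ∀ ω, 0 ≤ p ω) (hp1 : ∑ ω, p ω = 1)
    (σ : Ω → S) (τ : Ω → T) (Y : Ω → ℝ) (hY : ∀ ω, Y ω ∈ Icc (0:ℝ) 1)
    -- the transcript rectangles at time `t`:
    (St : Ω → Set S) (Tt : Ω → Set T)
    (hmem : ∀ ω, σ ω ∈ St ω ∧ τ ω ∈ Tt ω)
    (hrect : ∀ ω ω', σ ω' ∈ St ω → τ ω' ∈ Tt ω → St ω' = St ω ∧ Tt ω' = Tt ω)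
    -- the transcript rectangles at a later time `t'`, refining those at time `t`:
    (St' : Ω → Set S) (Tt' : Ω → Set T)
    (hmem' : ∀ ω, σ ω ∈ St' ω ∧ τ ω ∈ Tt' ω)
    (hrect' : ∀ ω ω', σ ω' ∈ St' ω → τ ω' ∈ Tt' ω → St' ω' = St' ω ∧ Tt' ω' = Tt' ω)
    (hrefine : ∀ ω, St' ω ⊆ St ω ∧ Tt' ω ⊆ Tt ω)
    (δ : ℝ)
    (hA : pexp p (fun ω => (postBoth p σ τ Y ω - postSigSet p σ τ Y (Tt ω) ω) ^ 2) ≤ δ)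
    (hB : pexp p (fun ω => (postBoth p σ τ Y ω - postSetSig p σ τ Y (St ω) ω) ^ 2) ≤ δ) :
    pexp p (fun ω => (postSigSet p σ τ Y (Tt' ω) ω - postSetSig p σ τ Y (St' ω) ω) ^ 2)
      ≤ 4 * δ := by
  classical
  set X : Ω → ℝ := postBoth p σ τ Y with hXdef
  set atomC : Ω → Finset Ω :=
    fun ω => Finset.univ.filter fun ω' => σ ω' = σ ω ∧ τ ω' = τ ω with hatomdef
  set cT : Ω → Finset Ω :=
    fun ω => Finset.univ.filter fun ω' => σ ω' = σ ω ∧ τ ω' ∈ Tt ω with hcTdef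
  set cT' : Ω → Finset Ω :=
    fun ω => Finset.univ.filter fun ω' => σ ω' = σ ω ∧ τ ω' ∈ Tt' ω with hcT'def
  set cS : Ω → Finset Ω :=
    fun ω => Finset.univ.filter fun ω' => σ ω' ∈ St ω ∧ τ ω' = τ ω with hcSdef
  set cS' : Ω → Finset Ω :=
    fun ω => Finset.univ.filter fun ω' => σ ω' ∈ St' ω ∧ τ ω' = τ ω with hcS'def
  -- partition properties
  have hatom_mem : ∀ ω, ω ∈ atomC ω := fun ω => by simp [hatomdef]
  have hatom_cong : ∀ ω ω', ω' ∈ atomC ω → atomC ω' = atomC ω := by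
    intro ω ω' h
    simp only [hatomdef, Finset.mem_filter] at h
    obtain ⟨-, hσ, hτ⟩ := h
    ext ω''
    simp only [hatomdef, Finset.mem_filter, Finset.mem_univ, true_and]
    rw [hσ, hτ]
  have hcT_mem : ∀ ω, ω ∈ cT ω := fun ω => by simp [hcTdef, (hmem ω).2]
  have hcT_cong : ∀ ω ω', ω' ∈ cT ω → cT ω' = cT ω := by
    intro ω ω' h
    simp only [hcTdef, Finset.mem_filter] at h
    obtain ⟨-, hσ, hτ⟩ := h
    have hTt : Tt ω' = Tt ω := (hrect ω ω' (hσ ▸ (hmem ω).1) hτ).2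
    ext ω''
    simp only [hcTdef, Finset.mem_filter, Finset.mem_univ, true_and]
    rw [hσ, hTt]
  have hcT'_mem : ∀ ω, ω ∈ cT' ω := fun ω => by simp [hcT'def, (hmem' ω).2]
  have hcT'_cong : ∀ ω ω', ω' ∈ cT' ω → cT' ω' = cT' ω := by
    intro ω ω' h
    simp only [hcT'def, Finset.mem_filter] at h
    obtain ⟨-, hσ, hτ⟩ := h
    have hTt : Tt' ω' = Tt' ω := (hrect' ω ω' (hσ ▸ (hmem' ω).1) hτ).2
    ext ω''
    simp only [hcT'def, Finset.mem_filter, Finset.mem_univ, true_and]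
    rw [hσ, hTt]
  have hcS_mem : ∀ ω, ω ∈ cS ω := fun ω => by simp [hcSdef, (hmem ω).1]
  have hcS_cong : ∀ ω ω', ω' ∈ cS ω → cS ω' = cS ω := by
    intro ω ω' h
    simp only [hcSdef, Finset.mem_filter] at h
    obtain ⟨-, hσ, hτ⟩ := h
    have hSt : St ω' = St ω := (hrect ω ω' hσ (hτ ▸ (hmem ω).2)).1
    ext ω''
    simp only [hcSdef, Finset.mem_filter, Finset.mem_univ, true_and]
    rw [hSt, hτ]
  have hcS'_mem : ∀ ω, ω ∈ cS' ω := fun ω => by simp [hcS'def, (hmem' ω).1]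
  have hcS'_cong : ∀ ω ω', ω' ∈ cS' ω → cS' ω' = cS' ω := by
    intro ω ω' h
    simp only [hcS'def, Finset.mem_filter] at h
    obtain ⟨-, hσ, hτ⟩ := h
    have hSt : St' ω' = St' ω := (hrect' ω ω' hσ (hτ ▸ (hmem' ω).2)).1
    ext ω''
    simp only [hcS'def, Finset.mem_filter, Finset.mem_univ, true_and]
    rw [hSt, hτ]
  -- atoms are contained in the cells
  have hsubT : ∀ ω, ∀ ω' ∈ cT ω, atomC ω' ⊆ cT ω := by
    intro ω ω' h ω'' h''
    simp only [hcTdef, hatomdef, Finset.mem_filter, Finset.mem_univ, true_and] at *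
    exact ⟨h''.1.trans h.1, h''.2 ▸ h.2⟩
  have hsubT' : ∀ ω, ∀ ω' ∈ cT' ω, atomC ω' ⊆ cT' ω := by
    intro ω ω' h ω'' h''
    simp only [hcT'def, hatomdef, Finset.mem_filter, Finset.mem_univ, true_and] at *
    exact ⟨h''.1.trans h.1, h''.2 ▸ h.2⟩
  have hsubS : ∀ ω, ∀ ω' ∈ cS ω, atomC ω' ⊆ cS ω := by
    intro ω ω' h ω'' h''
    simp only [hcSdef, hatomdef, Finset.mem_filter, Finset.mem_univ, true_and] at *
    exact ⟨h''.1 ▸ h.1, h''.2.trans h.2⟩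
  have hsubS' : ∀ ω, ∀ ω' ∈ cS' ω, atomC ω' ⊆ cS' ω := by
    intro ω ω' h ω'' h''
    simp only [hcS'def, hatomdef, Finset.mem_filter, Finset.mem_univ, true_and] at *
    exact ⟨h''.1 ▸ h.1, h''.2.trans h.2⟩
  -- X is the atom-mean of Y
  have hX : ∀ ω, X ω = cmean p Y (atomC ω) := fun ω => cexp_eq_cmean p Y _
  -- the posterior means are cell means of X
  have tower : ∀ (cell : Ω → Finset Ω), (∀ ω, ∀ ω' ∈ cell ω, atomC ω' ⊆ cell ω) →
      ∀ ω, cmean p Y (cell ω) = cmean p X (cell ω) := by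
    intro cell hsub ω
    unfold cmean
    congr 1
    rw [← tower_sum p hp Y atomC hatom_mem hatom_cong (cell ω) (hsub ω)]
    exact Finset.sum_congr rfl fun ω' _ => by rw [hX ω']
  have hgT : ∀ ω, postSigSet p σ τ Y (Tt ω) ω = cmean p X (cT ω) := fun ω =>
    (cexp_eq_cmean p Y _).trans (tower cT hsubT ω)
  have hgT' : ∀ ω, postSigSet p σ τ Y (Tt' ω) ω = cmean p X (cT' ω) := fun ω =>
    (cexp_eq_cmean p Y _).trans (tower cT' hsubT' ω)
  have hgS : ∀ ω, postSetSig p σ τ Y (St ω) ω = cmean p X (cS ω) := fun ω =>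
    (cexp_eq_cmean p Y _).trans (tower cS hsubS ω)
  have hgS' : ∀ ω, postSetSig p σ τ Y (St' ω) ω = cmean p X (cS' ω) := fun ω =>
    (cexp_eq_cmean p Y _).trans (tower cS' hsubS' ω)
  -- projection inequalities
  have hcrossT : ∀ ω ω', ω' ∈ cT' ω → cT ω' = cT ω := by
    intro ω ω' h
    apply hcT_cong
    simp only [hcT'def, hcTdef, Finset.mem_filter, Finset.mem_univ, true_and] at *
    exact ⟨h.1, (hrefine ω).2 h.2⟩
  have hcrossS : ∀ ω ω', ω' ∈ cS' ω → cS ω' = cS ω := by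
    intro ω ω' h
    apply hcS_cong
    simp only [hcS'def, hcSdef, Finset.mem_filter, Finset.mem_univ, true_and] at *
    exact ⟨(hrefine ω).1 h.1, h.2⟩
  have hAT : ∑ ω, p ω * (X ω - cmean p X (cT' ω)) ^ 2 ≤ δ := by
    refine le_trans (projection_le p hp X cT' cT hcT'_mem hcT'_cong hcrossT) ?_
    refine le_trans (le_of_eq ?_) hA
    unfold pexp
    simp only [hgT]
  have hBS : ∑ ω, p ω * (X ω - cmean p X (cS' ω)) ^ 2 ≤ δ := by
    refine le_trans (projection_le p hp X cS' cS hcS'_mem hcS'_cong hcrossS) ?_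
    refine le_trans (le_of_eq ?_) hB
    unfold pexp
    simp only [hgS]
  -- assemble
  show (∑ ω, p ω * (postSigSet p σ τ Y (Tt' ω) ω - postSetSig p σ τ Y (St' ω) ω) ^ 2) ≤ 4 * δ
  calc ∑ ω, p ω * (postSigSet p σ τ Y (Tt' ω) ω - postSetSig p σ τ Y (St' ω) ω) ^ 2
      = ∑ ω, p ω * (cmean p X (cT' ω) - cmean p X (cS' ω)) ^ 2 :=
        Finset.sum_congr rfl fun ω _ => by rw [hgT' ω, hgS' ω]
    _ ≤ ∑ ω, (2 * (p ω * (X ω - cmean p X (cT' ω)) ^ 2)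
          + 2 * (p ω * (X ω - cmean p X (cS' ω)) ^ 2)) := by
        refine Finset.sum_le_sum fun ω _ => ?_
        have key : (cmean p X (cT' ω) - cmean p X (cS' ω)) ^ 2
            ≤ 2 * (X ω - cmean p X (cT' ω)) ^ 2 + 2 * (X ω - cmean p X (cS' ω)) ^ 2 := by
          nlinarith [sq_nonneg ((X ω - cmean p X (cT' ω)) + (X ω - cmean p X (cS' ω)))]
        have := mul_le_mul_of_nonneg_left key (hp ω)
        linarith
    _ = 2 * (∑ ω, p ω * (X ω - cmean p X (cT' ω)) ^ 2)
          + 2 * (∑ ω, p ω * (X ω - cmean p X (cS' ω)) ^ 2) := by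
        rw [Finset.sum_add_distrib, ← Finset.mul_sum, ← Finset.mul_sum]
    _ ≤ 2 * δ + 2 * δ := by
        have h2 : (0:ℝ) ≤ 2 := by norm_num
        gcongr
    _ = 4 * δ := by ring
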